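/- Let G = C₂ ≀ ℤ with generating set S = {a, t}, where a generates the copy of C₂ at position 0 and t generates ℤ, and let A₀ = {g in the base : min(support g) ≥ 0}. Then |B_S(n) ∩ A₀| ≤ Σ_{j=0}^{⌊n/2⌋} 2^{j+1} ≤ 4·(√2)^n. -/

import Mathlib

open Function

variable (H : Type*) [Group H]

/-- The base of the restricted wreath product `H ≀ ℤ`: finitely supported functions `ℤ → H`. -/
def RWBase : Subgroup (ℤ → H) where
  carrier := {f | (mulSupport f).Finite}
  one_mem' := by simp [mulSupport_one]
  mul_mem' := fun hf hg => ((hf.union hg).subset (mulSupport_mul _ _))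
  inv_mem' := fun hf => by simpa [mulSupport_inv] using hf

/-- The shift automorphism of the base. -/
def shiftAut (k : ℤ) : MulAut (RWBase H) where
  toFun f := ⟨fun i => (f : ℤ → H) (i - k), by
    have h : (mulSupport fun i => (f : ℤ → H) (i - k)) =
        (fun i : ℤ => i - k) ⁻¹' mulSupport (f : ℤ → H) := rfl
    show (mulSupport fun i => (f : ℤ → H) (i - k)).Finite
    rw [h]
    exact f.2.preimage (Function.Injective.injOn (f := fun i : ℤ => i - k) fun a b hab => by simpa using hab)⟩
  invFun f := ⟨fun i => (f : ℤ → H) (i + k), by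
    have h : (mulSupport fun i => (f : ℤ → H) (i + k)) =
        (fun i : ℤ => i + k) ⁻¹' mulSupport (f : ℤ → H) := rfl
    show (mulSupport fun i => (f : ℤ → H) (i + k)).Finite
    rw [h]
    exact f.2.preimage (Function.Injective.injOn (f := fun i : ℤ => i + k) fun a b hab => by simpa using hab)⟩
  left_inv f := Subtype.ext (funext fun i => by simp)
  right_inv f := Subtype.ext (funext fun i => by simp)
  map_mul' f g := rfl

/-- The action of `ℤ` on the base by shifting. -/
def shiftHom : Multiplicative ℤ →* MulAut (RWBase H) where
  toFun k := shiftAut H (Multiplicative.toAdd k)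
  map_one' := MulEquiv.ext fun f => Subtype.ext (funext fun i => by simp [shiftAut])
  map_mul' k l := MulEquiv.ext fun f => Subtype.ext (funext fun i => by
    simp [shiftAut, sub_sub])

/-- The restricted wreath product `H ≀ ℤ`. -/
abbrev WreathZ := RWBase H ⋊[shiftHom H] Multiplicative ℤ

/-- The base subgroup `A` of `H ≀ ℤ`. -/
def wreathBase : Subgroup (WreathZ H) := (SemidirectProduct.inl (φ := shiftHom H)).range

/-- The generator `t` of the head `ℤ`. -/
def tGen : WreathZ H := SemidirectProduct.inr (Multiplicative.ofAdd 1)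

/-- The element of the base supported at `0` with value `h`. -/
def single0 (h : H) : RWBase H :=
  ⟨fun i => if i = 0 then h else 1, by
    refine Set.Finite.subset (Set.finite_singleton (0 : ℤ)) fun i hi => ?_
    rw [mem_mulSupport] at hi
    by_contra h0
    exact hi (if_neg h0)⟩

/-- The inclusion of `H` as the copy at coordinate `0`. -/
def incl0 (h : H) : WreathZ H := SemidirectProduct.inl (single0 H h)

/-- The word length of `g` with respect to the generating set `S`:
the least length of a word in `S ∪ S⁻¹` representing `g`. -/
noncomputable def wordLength {G : Type*} [Group G] (S : Set G) (g : G) : ℕ :=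
  sInf {n | ∃ l : List G, (∀ x ∈ l, x ∈ S ∨ x⁻¹ ∈ S) ∧ l.prod = g ∧ l.length = n}

/-- The ball of radius `n` in the Cayley graph of `G` with respect to `S`. -/
def ball {G : Type*} [Group G] (S : Set G) (n : ℕ) : Set G :=
  {g | wordLength S g ≤ n}

/-- The translation length `τ_S(g) = limsup_n |g^n|_S / n`. -/
noncomputable def translationLength {G : Type*} [Group G] (S : Set G) (g : G) : ℝ :=
  Filter.limsup (fun n : ℕ => (wordLength S (g ^ n) : ℝ) / n) Filter.atTop

/-- The set of base elements whose support is contained in the non-negative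
integers (together with the identity). -/
def basePos (H : Type*) [Group H] : Set (WreathZ H) :=
  {g | g.right = 1 ∧ ∀ i : ℤ, i < 0 → (g.left : ℤ → H) i = 1}

open SemidirectProduct Multiplicative

local notation "M2" => Multiplicative (ZMod 2)

namespace LampAux

lemma prod_val (s g : WreathZ M2) (m : ℤ) : ((s * g).left : ℤ → M2) m
    = (s.left : ℤ → M2) m * (g.left : ℤ → M2) (m - toAdd s.right) := rfl

lemma word_bound (l : List (WreathZ M2))
    (hl : ∀ x ∈ l, x ∈ ({incl0 (Multiplicative (ZMod 2)) (Multiplicative.ofAdd (1 : ZMod 2)),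
        tGen (Multiplicative (ZMod 2))} : Set (WreathZ M2)) ∨
      x⁻¹ ∈ ({incl0 (Multiplicative (ZMod 2)) (Multiplicative.ofAdd (1 : ZMod 2)),
        tGen (Multiplicative (ZMod 2))} : Set (WreathZ M2))) :
    |toAdd l.prod.right| ≤ (l.length : ℤ) ∧
      ∀ m : ℤ, (l.prod.left : ℤ → M2) m ≠ 1 →
        |m| + |m - toAdd l.prod.right| + 1 ≤ (l.length : ℤ) := by
  induction l with
  | nil =>
    refine ⟨by simp, fun m hm => absurd rfl hm⟩
  | cons s l ih =>
    have hs := hl s List.mem_cons_self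
    obtain ⟨ih1, ih2⟩ := ih (fun x hx => hl x (List.mem_cons_of_mem _ hx))
    have hcase : (s.right = 1 ∧ ∀ i : ℤ, i ≠ 0 → (s.left : ℤ → M2) i = 1) ∨
        ((s.left : ℤ → M2) = 1 ∧ |toAdd s.right| ≤ 1) := by
      simp only [Set.mem_insert_iff, Set.mem_singleton_iff, incl0] at hs
      rcases hs with (rfl | rfl) | (hs | hs)
      · exact Or.inl ⟨rfl, fun i hi => if_neg hi⟩
      · exact Or.inr ⟨rfl, by norm_num [tGen]⟩
      · left
        have hs' : s = (inl (single0 (Multiplicative (ZMod 2))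
            (Multiplicative.ofAdd (1 : ZMod 2)))⁻¹ : WreathZ M2) := by
          rw [map_inv, ← hs, inv_inv]
        subst hs'
        refine ⟨right_inl _, fun i hi => ?_⟩
        show (((single0 (Multiplicative (ZMod 2))
            (Multiplicative.ofAdd (1 : ZMod 2)) : RWBase M2) : ℤ → M2) i)⁻¹ = 1
        rw [show ((single0 (Multiplicative (ZMod 2))
            (Multiplicative.ofAdd (1 : ZMod 2)) : RWBase M2) : ℤ → M2) i = 1 from if_neg hi]
        exact inv_one
      · right
        have hs' : s = (inr ((Multiplicative.ofAdd (1 : ℤ))⁻¹) : WreathZ M2) := by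
          rw [map_inv, show (inr (Multiplicative.ofAdd (1:ℤ)) : WreathZ M2)
            = tGen (Multiplicative (ZMod 2)) from rfl, ← hs, inv_inv]
        subst hs'
        exact ⟨rfl, by simp⟩
    have hlen : ((s :: l).length : ℤ) = l.length + 1 := by push_cast [List.length_cons]; ring
    have hprod : (s :: l).prod = s * l.prod := List.prod_cons
    rcases hcase with ⟨hr, hA⟩ | ⟨hL, hT⟩
    · have hk : toAdd ((s :: l).prod).right = toAdd l.prod.right := by
        rw [hprod, mul_right, hr, one_mul]
      constructor
      · rw [hk]; omega
      · intro m hm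
        rw [hprod, prod_val, hr, toAdd_one, sub_zero] at hm
        rw [hk, hlen]
        by_cases hm0 : m = 0
        · subst hm0
          simp only [abs_zero, zero_sub, abs_neg]
          omega
        · rw [hA m hm0, one_mul] at hm
          have := ih2 m hm
          omega
    · have hk : toAdd ((s :: l).prod).right = toAdd s.right + toAdd l.prod.right := by
        rw [hprod, mul_right]; rfl
      constructor
      · rw [hk, hlen]
        have := abs_add_le (toAdd s.right) (toAdd l.prod.right)
        omega
      · intro m hm
        rw [hprod, prod_val, hL] at hm
        simp only [Pi.one_apply, one_mul] at hm
        have h2 := ih2 _ hm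
        have h3 : |m| ≤ |m - toAdd s.right| + |toAdd s.right| := by
          have := abs_add_le (m - toAdd s.right) (toAdd s.right)
          simpa using this
        have h4 : m - toAdd ((s::l).prod).right = m - toAdd s.right - toAdd l.prod.right := by
          rw [hk]; ring
        rw [h4, hlen]
        omega



local notation "SS" => ({incl0 (Multiplicative (ZMod 2)) (Multiplicative.ofAdd (1 : ZMod 2)),
    tGen (Multiplicative (ZMod 2))} : Set (WreathZ M2))

lemma memcongr {G : Type*} [Group G] {K : Subgroup G} {x y : G} (h : x = y) (hy : y ∈ K) :
    x ∈ K := h ▸ hy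

lemma inr_mem (x : Multiplicative ℤ) :
    (inr x : WreathZ M2) ∈ Subgroup.closure SS := by
  have htGen : (inr (Multiplicative.ofAdd (1 : ℤ)) : WreathZ M2) ∈ Subgroup.closure SS :=
    Subgroup.subset_closure (Set.mem_insert_iff.mpr (Or.inr rfl))
  have key : ∀ k : ℤ, (inr (Multiplicative.ofAdd k) : WreathZ M2) ∈ Subgroup.closure SS := by
    intro k
    induction k using Int.induction_on with
    | zero => exact memcongr (map_one inr) (one_mem _)
    | succ k ih =>
      exact memcongr (map_mul inr (Multiplicative.ofAdd (k : ℤ)) (Multiplicative.ofAdd 1))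
        (mul_mem ih htGen)
    | pred k ih =>
      have h : (inr (Multiplicative.ofAdd (-(k : ℤ) - 1)) : WreathZ M2)
          = inr (Multiplicative.ofAdd (-(k : ℤ))) * (inr (Multiplicative.ofAdd (1 : ℤ)))⁻¹ := by
        rw [← map_inv, ← map_mul]
        rfl
      exact memcongr h (mul_mem ih (inv_mem htGen))
  exact memcongr (congrArg inr (ofAdd_toAdd x).symm) (key (toAdd x))

lemma single_mem (j : ℤ) (v : M2) :
    (inl (shiftHom (Multiplicative (ZMod 2)) (Multiplicative.ofAdd j)
      (single0 (Multiplicative (ZMod 2)) v)) : WreathZ M2) ∈ Subgroup.closure SS := by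
  rw [inl_aut]
  refine mul_mem (mul_mem (inr_mem _) ?_) (inr_mem _)
  have hv : ∀ w : M2, w = 1 ∨ w = Multiplicative.ofAdd (1 : ZMod 2) := by decide
  rcases hv v with rfl | rfl
  · have h0 : single0 (Multiplicative (ZMod 2)) (1 : M2) = 1 :=
      Subtype.ext (funext fun i => by
        show (if i = 0 then (1 : M2) else 1) = 1
        split <;> rfl)
    rw [h0]; exact memcongr (map_one inl) (one_mem _)
  · exact Subgroup.subset_closure (Set.mem_insert_iff.mpr (Or.inl rfl))

lemma base_mem (f : RWBase M2) : (inl f : WreathZ M2) ∈ Subgroup.closure SS := by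
  classical
  suffices h : ∀ (F : Finset ℤ) (f : RWBase M2), mulSupport (f : ℤ → M2) ⊆ ↑F →
      (inl f : WreathZ M2) ∈ Subgroup.closure SS by
    exact h f.2.toFinset f (fun i hi => by
      exact Finset.mem_coe.mpr ((Set.Finite.mem_toFinset _).mpr hi))
  intro F
  induction F using Finset.induction_on with
  | empty =>
    intro f hf
    have h1 : f = 1 := Subtype.ext (funext fun i => by
      by_contra h
      have h2 := hf (mem_mulSupport.mpr h)
      rw [Finset.coe_empty] at h2
      exact h2)
    rw [h1]; exact memcongr (map_one inl) (one_mem _)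
  | @insert j F hj ihF =>
    intro f hf
    set σ : RWBase M2 := shiftHom (Multiplicative (ZMod 2)) (Multiplicative.ofAdd j)
      (single0 (Multiplicative (ZMod 2)) ((f : ℤ → M2) j)) with hσ
    have hfe : f = (f * σ⁻¹) * σ := by group
    have hsupp : mulSupport ((f * σ⁻¹ : RWBase M2) : ℤ → M2) ⊆ ↑F := by
      intro i hi
      have hval : ((f * σ⁻¹ : RWBase M2) : ℤ → M2) i
          = (f : ℤ → M2) i * ((if i - j = 0 then (f : ℤ → M2) j else 1))⁻¹ := rfl
      rw [mem_mulSupport, hval] at hi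
      have hij : i ≠ j := by
        rintro rfl
        simp at hi
      rw [if_neg (by omega : i - j ≠ 0), inv_one, mul_one] at hi
      have := hf (mem_mulSupport.mpr hi)
      simp only [Finset.coe_insert, Set.mem_insert_iff] at this
      rcases this with h | h
      · exact absurd h hij
      · exact h
    rw [hfe, map_mul]
    exact mul_mem (ihF _ hsupp) (single_mem j _)

lemma all_mem (g : WreathZ M2) : g ∈ Subgroup.closure SS := by
  rw [← inl_left_mul_inr_right g]
  exact mul_mem (base_mem g.left) (inr_mem g.right)

lemma exists_word (g : WreathZ M2) :
    ∃ l : List (WreathZ M2), (∀ x ∈ l, x ∈ SS ∨ x⁻¹ ∈ SS) ∧ l.prod = g := by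
  have h := all_mem g
  rw [← Subgroup.mem_toSubmonoid, Subgroup.closure_toSubmonoid] at h
  obtain ⟨l, hl, hp⟩ := Submonoid.exists_list_of_mem_closure h
  refine ⟨l, fun x hx => ?_, hp⟩
  rcases hl x hx with h | h
  · exact Or.inl h
  · exact Or.inr (Set.mem_inv.mp h)

lemma sum_pow_two (k : ℕ) : ∑ j ∈ Finset.range k, 2 ^ (j + 1) = 2 ^ (k + 1) - 2 := by
  induction k with
  | zero => simp
  | succ k ih =>
    rw [Finset.sum_range_succ, ih]
    have h1 : 2 ≤ 2 ^ (k + 1) := Nat.one_lt_two_pow (by omega)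
    have h2 : (2:ℕ) ^ (k + 1 + 1) = 2 * 2 ^ (k + 1) := by ring
    omega

end LampAux

/-- For the lamplighter group `G = C₂ ≀ ℤ` with generating set `S = {a, t}`
(`a` the generator of the copy of `C₂` at position `0`, `t` the generator of `ℤ`),
the number of elements of the ball of radius `n` lying in
`A₀ = {g ∈ base : min (support g) ≥ 0}` is at most
`Σ_{j=0}^{⌊n/2⌋} 2^{j+1} ≤ 4 (√2)^n`. -/
theorem lamplighter_ball_inter_basePos_bound (n : ℕ)
    (a : WreathZ (Multiplicative (ZMod 2)))
    (ha : a = incl0 (Multiplicative (ZMod 2)) (Multiplicative.ofAdd (1 : ZMod 2)))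
    (S : Set (WreathZ (Multiplicative (ZMod 2))))
    (hS : S = {a, tGen (Multiplicative (ZMod 2))}) :
    Nat.card (ball S n ∩ basePos (Multiplicative (ZMod 2)) : Set (WreathZ (Multiplicative (ZMod 2)))) ≤
        ∑ j ∈ Finset.range (n / 2 + 1), 2 ^ (j + 1) ∧
      ((∑ j ∈ Finset.range (n / 2 + 1), 2 ^ (j + 1) : ℕ) : ℝ) ≤ 4 * Real.sqrt 2 ^ n := by
  subst ha
  subst hS
  constructor
  · -- counting part
    -- support of elements of the intersection is contained in [0, n/2]
    have hsupp : ∀ g : WreathZ (Multiplicative (ZMod 2)),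
        g ∈ (ball {incl0 (Multiplicative (ZMod 2)) (Multiplicative.ofAdd (1 : ZMod 2)),
        tGen (Multiplicative (ZMod 2))} n ∩ basePos (Multiplicative (ZMod 2)) :
          Set (WreathZ (Multiplicative (ZMod 2)))) →
        ∀ i : ℤ, (i < 0 ∨ ((n / 2 : ℕ) : ℤ) < i) →
          ((SemidirectProduct.left g : RWBase (Multiplicative (ZMod 2))) : ℤ → Multiplicative (ZMod 2)) i = 1 := by
      rintro g ⟨hg, hgr, hneg⟩ i hi
      rcases hi with hi | hi
      · exact hneg i hi
      · by_contra hne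
        obtain ⟨l0, hl01, hl02⟩ := LampAux.exists_word g
        have hW : {k | ∃ l : List (WreathZ (Multiplicative (ZMod 2))),
            (∀ x ∈ l, x ∈ ({incl0 (Multiplicative (ZMod 2)) (Multiplicative.ofAdd (1 : ZMod 2)),
              tGen (Multiplicative (ZMod 2))} : Set (WreathZ (Multiplicative (ZMod 2)))) ∨
              x⁻¹ ∈ ({incl0 (Multiplicative (ZMod 2)) (Multiplicative.ofAdd (1 : ZMod 2)),
              tGen (Multiplicative (ZMod 2))} : Set (WreathZ (Multiplicative (ZMod 2))))) ∧
            l.prod = g ∧ l.length = k}.Nonempty := ⟨l0.length, l0, hl01, hl02, rfl⟩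
        obtain ⟨l, hl1, hl2, hl3⟩ := Nat.sInf_mem hW
        have hlen : l.length ≤ n := le_trans (le_of_eq hl3) hg
        have hb := (LampAux.word_bound l hl1).2 i (by rw [hl2]; exact hne)
        rw [hl2, hgr] at hb
        simp only [toAdd_one, sub_zero] at hb
        have hab : |i| = i := abs_of_nonneg (by omega)
        rw [hab] at hb
        have : (l.length : ℤ) ≤ (n : ℤ) := by exact_mod_cast hlen
        omega
    have hinj : Function.Injective
        (fun (g : ↥(ball {incl0 (Multiplicative (ZMod 2)) (Multiplicative.ofAdd (1 : ZMod 2)),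
          tGen (Multiplicative (ZMod 2))} n ∩ basePos (Multiplicative (ZMod 2)) :
            Set (WreathZ (Multiplicative (ZMod 2))))) =>
          (fun j : Fin (n / 2 + 1) =>
            Multiplicative.toAdd (((SemidirectProduct.left (g.1 : WreathZ (Multiplicative (ZMod 2)))
                : RWBase (Multiplicative (ZMod 2))) : ℤ → Multiplicative (ZMod 2))
              ((j : ℕ) : ℤ)))) := by
      rintro ⟨g, hg⟩ ⟨g', hg'⟩ h
      simp only at h
      apply Subtype.ext
      have hr : SemidirectProduct.right g = SemidirectProduct.right g' := by
        rw [hg.2.1, hg'.2.1]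
      have hleft : SemidirectProduct.left g = SemidirectProduct.left g' := by
        apply Subtype.ext
        funext i
        by_cases hcases : i < 0 ∨ ((n / 2 : ℕ) : ℤ) < i
        · rw [hsupp g hg i hcases, hsupp g' hg' i hcases]
        · push_neg at hcases
          obtain ⟨h0, h1⟩ := hcases
          set j : Fin (n / 2 + 1) := ⟨i.toNat, by omega⟩ with hj
          have hji : ((j : ℕ) : ℤ) = i := by
            rw [hj]
            exact Int.toNat_of_nonneg h0
          have := congrFun h j
          rw [hji] at this
          exact Multiplicative.toAdd.injective this
      exact SemidirectProduct.ext hleft hr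
    calc Nat.card (ball {incl0 (Multiplicative (ZMod 2)) (Multiplicative.ofAdd (1 : ZMod 2)),
          tGen (Multiplicative (ZMod 2))} n ∩ basePos (Multiplicative (ZMod 2)) :
            Set (WreathZ (Multiplicative (ZMod 2))))
        ≤ Nat.card (Fin (n / 2 + 1) → ZMod 2) := Nat.card_le_card_of_injective _ hinj
      _ = 2 ^ (n / 2 + 1) := by
          rw [Nat.card_eq_fintype_card, Fintype.card_fun]
          simp [ZMod.card]
      _ ≤ ∑ j ∈ Finset.range (n / 2 + 1), 2 ^ (j + 1) := by
          exact Finset.single_le_sum (f := fun j => 2 ^ (j + 1))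
            (fun i _ => Nat.zero_le _) (Finset.self_mem_range_succ (n / 2))
  · -- arithmetic part
    have hsum : (∑ j ∈ Finset.range (n / 2 + 1), 2 ^ (j + 1) : ℕ) ≤ 2 ^ (n / 2 + 2) := by
      rw [LampAux.sum_pow_two, show n / 2 + 1 + 1 = n / 2 + 2 by omega]
      exact Nat.sub_le _ _
    have h1 : ((∑ j ∈ Finset.range (n / 2 + 1), 2 ^ (j + 1) : ℕ) : ℝ) ≤ (2 : ℝ) ^ (n / 2 + 2) := by
      calc ((∑ j ∈ Finset.range (n / 2 + 1), 2 ^ (j + 1) : ℕ) : ℝ)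
          ≤ ((2 ^ (n / 2 + 2) : ℕ) : ℝ) := Nat.cast_le.mpr hsum
        _ = (2 : ℝ) ^ (n / 2 + 2) := by push_cast; ring
    have hsqrt1 : (1 : ℝ) ≤ Real.sqrt 2 := by
      rw [show (1:ℝ) = Real.sqrt 1 from (Real.sqrt_one).symm]
      exact Real.sqrt_le_sqrt (by norm_num)
    have h2 : (2 : ℝ) ^ (n / 2) ≤ Real.sqrt 2 ^ n := by
      have he : (2 : ℝ) ^ (n / 2) = Real.sqrt 2 ^ (2 * (n / 2)) := by
        rw [pow_mul, Real.sq_sqrt (by norm_num : (0:ℝ) ≤ 2)]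
      rw [he]
      exact pow_le_pow_right₀ hsqrt1 (by omega)
    calc ((∑ j ∈ Finset.range (n / 2 + 1), 2 ^ (j + 1) : ℕ) : ℝ)
        ≤ (2 : ℝ) ^ (n / 2 + 2) := h1
      _ = 4 * (2 : ℝ) ^ (n / 2) := by ring
      _ ≤ 4 * Real.sqrt 2 ^ n := by
          linarith [h2]
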